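/- Let α ∈ (0,1), h > 0, t_j = jh, n ≥ 1. There exists a function f ∈ C²([0, t_{n+1}]) with |f''| ≤ 1 such that the error of replacing f by its linear interpolant at nodes t_{n−1}, t_n in the integral (1/Γ(α)) ∫_0^{t_{n+1}} (t_{n+1}−λ)^{α−1} f(λ) dλ is bounded below by c · t_{n+1}^{2+α} for a positive constant c depending only on α; concretely f(λ) = (λ − t_n)(λ − t_{n−1})/2 realizes such a lower bound. -/

import Mathlib

open Real intervalIntegral

lemma key_integral (α h T : ℝ) (hα : 0 < α) (hα1 : α < 1) (hT : 0 < T) :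
    ∫ l in (0:ℝ)..T, (T - l) ^ (α - 1) * ((l - (T - h)) * (l - (T - 2*h)) / 2)
      = (T ^ (α+2) / (α+2) - 3*h*T^(α+1)/(α+1) + 2*h^2*T^α/α) / 2 := by
  have hpt : ∀ x : ℝ, 0 ≤ x →
      x ^ (α-1) * ((h - x) * (2*h - x) / 2)
        = (x^(α+1) - 3*h*x^α + 2*h^2*x^(α-1)) / 2 := by
    intro x hx
    rcases hx.eq_or_lt with rfl | hx
    · rw [Real.zero_rpow (by linarith), Real.zero_rpow (by linarith),
        Real.zero_rpow (by linarith)]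
      ring
    · have e2 : x ^ (α-1) * x^2 = x ^ (α+1) := by
        rw [← Real.rpow_natCast x 2, ← Real.rpow_add hx]
        congr 1
        push_cast; ring
      have e1 : x ^ (α-1) * x = x ^ α := by
        nth_rewrite 2 [← Real.rpow_one x]
        rw [← Real.rpow_add hx]
        congr 1; ring
      linear_combination (1/2) * e2 - (3*h/2) * e1
  have step1 : ∫ l in (0:ℝ)..T, (T - l) ^ (α - 1) * ((l - (T - h)) * (l - (T - 2*h)) / 2)
      = ∫ l in (0:ℝ)..T, ((T-l)^(α+1) - 3*h*(T-l)^α + 2*h^2*(T-l)^(α-1)) / 2 := by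
    apply intervalIntegral.integral_congr
    intro l hl
    rw [Set.uIcc_of_le hT.le] at hl
    have h1 : l - (T - h) = h - (T - l) := by ring
    have h2 : l - (T - 2*h) = 2*h - (T - l) := by ring
    simp only [h1, h2]
    exact hpt (T - l) (by linarith [hl.2])
  rw [step1]
  have step2 : ∫ l in (0:ℝ)..T, ((T-l)^(α+1) - 3*h*(T-l)^α + 2*h^2*(T-l)^(α-1)) / 2
      = ∫ x in (0:ℝ)..T, (x^(α+1) - 3*h*x^α + 2*h^2*x^(α-1)) / 2 := by
    have := intervalIntegral.integral_comp_sub_left (a := (0:ℝ)) (b := T)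
      (fun x => (x^(α+1) - 3*h*x^α + 2*h^2*x^(α-1)) / 2) T
    simpa using this
  rw [step2]
  have i1 : IntervalIntegrable (fun x : ℝ => x^(α+1)) MeasureTheory.volume 0 T :=
    intervalIntegral.intervalIntegrable_rpow' (by linarith)
  have i2 : IntervalIntegrable (fun x : ℝ => x^α) MeasureTheory.volume 0 T :=
    intervalIntegral.intervalIntegrable_rpow' (by linarith)
  have i3 : IntervalIntegrable (fun x : ℝ => x^(α-1)) MeasureTheory.volume 0 T :=
    intervalIntegral.intervalIntegrable_rpow' (by linarith)
  rw [intervalIntegral.integral_div,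
    intervalIntegral.integral_add ((i1.sub (i2.const_mul (3*h)))) (i3.const_mul (2*h^2)),
    intervalIntegral.integral_sub i1 (i2.const_mul (3*h)),
    intervalIntegral.integral_const_mul, intervalIntegral.integral_const_mul,
    integral_rpow (Or.inl (by linarith)), integral_rpow (Or.inl (by linarith)),
    integral_rpow (Or.inl (by linarith))]
  rw [Real.zero_rpow (by linarith), Real.zero_rpow (by linarith), Real.zero_rpow (by linarith),
    show α + 1 + 1 = α + 2 by ring, show α - 1 + 1 = α by ring]
  ring


theorem quadrature_error_lower_bound_exists
    (α : ℝ) (hα : 0 < α) (hα1 : α < 1) :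
    ∃ c > (0:ℝ), ∀ h : ℝ, 0 < h → ∀ n : ℕ, 1 ≤ n →
      ∃ f : ℝ → ℝ,
        (∀ l, f l = (l - (n : ℝ) * h) * (l - ((n : ℝ) - 1) * h) / 2) ∧
        ContDiff ℝ 2 f ∧
        (∀ x, |iteratedDeriv 2 f x| ≤ 1) ∧
        |(1 / Real.Gamma α) *
            ∫ l in (0:ℝ)..((n + 1 : ℝ) * h), ((n + 1 : ℝ) * h - l) ^ (α - 1) *
              (f l - (f ((n : ℝ) * h) * (l - ((n : ℝ) - 1) * h) / h
                      - f (((n : ℝ) - 1) * h) * (l - (n : ℝ) * h) / h))|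
          ≥ c * ((n + 1 : ℝ) * h) ^ (2 + α) := by
  have hΓ : 0 < Real.Gamma α := Real.Gamma_pos_of_pos hα
  set m : ℝ := 1/(α+2) - 9*α/(8*(α+1)^2) with hm
  have h2p : (0:ℝ) < α + 2 := by linarith
  have h1p : (0:ℝ) < α + 1 := by linarith
  have hmpos : 0 < m := by
    rw [hm, sub_pos, div_lt_div_iff₀ (by positivity) h2p]
    nlinarith
  refine ⟨m / (2 * Real.Gamma α), by positivity, ?_⟩
  intro h hh n hn
  set a : ℝ := (n : ℝ) * h with ha
  set b : ℝ := ((n : ℝ) - 1) * h with hb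
  refine ⟨fun l => (l - a) * (l - b) / 2, fun l => rfl, ?_, ?_, ?_⟩
  · exact ((contDiff_id.sub contDiff_const).mul (contDiff_id.sub contDiff_const)).div_const 2
  · intro x
    have hd1 : deriv (fun l : ℝ => (l - a) * (l - b) / 2) = fun l => ((l - b) + (l - a)) / 2 := by
      funext y
      have : HasDerivAt (fun l : ℝ => (l - a) * (l - b) / 2) (((y - b) + (y - a)) / 2) y := by
        have := (((hasDerivAt_id y).sub_const a).mul ((hasDerivAt_id y).sub_const b)).div_const 2
        simpa [mul_comm] using this
      exact this.deriv
    rw [show (2:ℕ) = 1 + 1 from rfl, iteratedDeriv_succ, iteratedDeriv_one, hd1]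
    have : HasDerivAt (fun l : ℝ => ((l - b) + (l - a)) / 2) 1 x := by
      have := ((((hasDerivAt_id x).sub_const b)).add (((hasDerivAt_id x).sub_const a))).div_const 2
      simpa using this
    rw [this.deriv]
    norm_num
  · set T : ℝ := ((n : ℝ) + 1) * h with hT
    have hTpos : 0 < T := mul_pos (by positivity) hh
    have hint : (∫ l in (0:ℝ)..T, (T - l) ^ (α - 1) *
          ((l - a) * (l - b) / 2 -
            ((a - a) * (a - b) / 2 * (l - b) / h - (b - a) * (b - b) / 2 * (l - a) / h)))
        = (T ^ (α+2) / (α+2) - 3*h*T^(α+1)/(α+1) + 2*h^2*T^α/α) / 2 := by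
      rw [intervalIntegral.integral_congr (g := fun l =>
        (T - l) ^ (α - 1) * ((l - (T - h)) * (l - (T - 2*h)) / 2))
        (fun l _ => by simp only [ha, hb, hT]; ring_nf)]
      exact key_integral α h T hα hα1 hTpos
    beta_reduce
    rw [hint]
    -- lower bound
    have hTα : (0:ℝ) < T ^ α := Real.rpow_pos_of_pos hTpos α
    have hq : m * T^2 ≤ T^2/(α+2) - 3*h*T/(α+1) + 2*h^2/α := by
      have hsq : (0:ℝ) ≤ (4*(α+1)*h - 3*α*T)^2 / (8*α*(α+1)^2) :=
        div_nonneg (sq_nonneg _) (by positivity)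
      have hE : T^2/(α+2) - 3*h*T/(α+1) + 2*h^2/α - m*T^2
          = (4*(α+1)*h - 3*α*T)^2 / (8*α*(α+1)^2) := by
        rw [hm]; field_simp; ring
      linarith [hE ▸ hsq]
    have e2 : T ^ (α+2) = T ^ α * T^2 := by
      rw [Real.rpow_add hTpos, Real.rpow_two, ← Real.rpow_natCast T 2]
    have e1 : T ^ (α+1) = T ^ α * T := by
      rw [Real.rpow_add hTpos, Real.rpow_one]
    have hV : m / 2 * T ^ (α+2) ≤ (T ^ (α+2) / (α+2) - 3*h*T^(α+1)/(α+1) + 2*h^2*T^α/α) / 2 := by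
      rw [e2, e1]
      have := mul_le_mul_of_nonneg_left hq hTα.le
      calc m / 2 * (T ^ α * T^2) = T ^ α * (m * T^2) / 2 := by ring
        _ ≤ T ^ α * (T^2/(α+2) - 3*h*T/(α+1) + 2*h^2/α) / 2 := by linarith
        _ = (T ^ α * T^2 / (α+2) - 3*h*(T^α*T)/(α+1) + 2*h^2*T^α/α) / 2 := by ring
    have h2α : T ^ (2 + α) = T ^ (α + 2) := by rw [add_comm]
    calc m / (2 * Real.Gamma α) * T ^ (2+α)
        = (1 / Real.Gamma α) * (m / 2 * T ^ (α+2)) := by rw [h2α]; ring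
      _ ≤ (1 / Real.Gamma α) * ((T ^ (α+2) / (α+2) - 3*h*T^(α+1)/(α+1) + 2*h^2*T^α/α) / 2) := by
          apply mul_le_mul_of_nonneg_left hV (by positivity)
      _ ≤ |(1 / Real.Gamma α) * ((T ^ (α+2) / (α+2) - 3*h*T^(α+1)/(α+1) + 2*h^2*T^α/α) / 2)| :=
          le_abs_self _
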